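/- Let Δ be a pure simplicial complex of dimension d ≥ 2 on vertex set V such that every squarefree monomial of degree d+2 in the variables indexed by V is divisible by some facet monomial of Δ (i.e., the generating set of the facet ideal is upper perfect). Then Δ is connected. -/

import Mathlib

/-- Let `Δ` be a pure simplicial complex of dimension `d ≥ 2` (given by its
set of facets, each of cardinality `d + 1`) on a vertex set `V` such that every subset
`S ⊆ V` with `|S| = d + 2` contains some facet (upper perfection of the generating set of
the facet ideal). Then `Δ` is connected: any two facets are linked by a chain of facets
with consecutive nonempty intersections. -/
theorem stmt_3 {V : Type} [DecidableEq V] (d : ℕ) (hd : 2 ≤ d)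
    (facets : Finset (Finset V)) (hne : facets.Nonempty)
    (hpure : ∀ F ∈ facets, F.card = d + 1)
    (hup : ∀ S : Finset V, S.card = d + 2 → ∃ F ∈ facets, F ⊆ S) :
    ∀ F ∈ facets, ∀ F' ∈ facets,
      Relation.ReflTransGen
        (fun A B => A ∈ facets ∧ B ∈ facets ∧ (A ∩ B).Nonempty) F F' := by
  intro F hF F' hF'
  by_cases hint : (F ∩ F').Nonempty
  · exact Relation.ReflTransGen.single ⟨hF, hF', hint⟩
  · -- F and F' are disjoint
    have hdisj : Disjoint F F' := Finset.disjoint_iff_inter_eq_empty.2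
      (Finset.not_nonempty_iff_eq_empty.1 hint)
    obtain ⟨A, hA, hAcard⟩ := Finset.exists_subset_card_eq (s := F) (n := d)
      (by rw [hpure F hF]; omega)
    obtain ⟨B, hB, hBcard⟩ := Finset.exists_subset_card_eq (s := F') (n := 2)
      (by rw [hpure F' hF']; omega)
    have hABdisj : Disjoint A B := hdisj.mono hA hB
    have hScard : (A ∪ B).card = d + 2 := by
      rw [Finset.card_union_of_disjoint hABdisj, hAcard, hBcard]
    obtain ⟨G, hG, hGS⟩ := hup (A ∪ B) hScard
    have hGcard : G.card = d + 1 := hpure G hG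
    have h1 : (G ∩ A).Nonempty := by
      rw [← Finset.card_pos]
      have hsub : G \ B ⊆ G ∩ A := by
        intro x hx
        rw [Finset.mem_sdiff] at hx
        rcases Finset.mem_union.1 (hGS hx.1) with h | h
        · exact Finset.mem_inter.2 ⟨hx.1, h⟩
        · exact absurd h hx.2
      have := Finset.card_le_card hsub
      have := Finset.le_card_sdiff B G
      omega
    have h2 : (G ∩ B).Nonempty := by
      rw [← Finset.card_pos]
      have hsub : G \ A ⊆ G ∩ B := by
        intro x hx
        rw [Finset.mem_sdiff] at hx
        rcases Finset.mem_union.1 (hGS hx.1) with h | h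
        · exact absurd h hx.2
        · exact Finset.mem_inter.2 ⟨hx.1, h⟩
      have := Finset.card_le_card hsub
      have := Finset.le_card_sdiff A G
      omega
    have hFG : (F ∩ G).Nonempty := by
      obtain ⟨x, hx⟩ := h1
      rw [Finset.mem_inter] at hx
      exact ⟨x, Finset.mem_inter.2 ⟨hA hx.2, hx.1⟩⟩
    have hGF' : (G ∩ F').Nonempty := by
      obtain ⟨x, hx⟩ := h2
      rw [Finset.mem_inter] at hx
      exact ⟨x, Finset.mem_inter.2 ⟨hx.1, hB hx.2⟩⟩
    exact Relation.ReflTransGen.head ⟨hF, hG, hFG⟩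
      (Relation.ReflTransGen.single ⟨hG, hF', hGF'⟩)
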